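/- Suppose the distribution functions f₋₁, f₀, f₁ : ℤ × ℕ → ℝ satisfy the MRT-LB evolution equations for all j ∈ ℤ and n ∈ ℕ, and let φⱼⁿ be the associated macroscopic variable. Then for every j ∈ ℤ and every n ≥ 1, one has φⱼⁿ⁺¹ = (s₁/2 + s₂/2 − 1)·(f₀(j−1,n) − 2f₀(j,n) + f₀(j+1,n)) + (1 − s₁/2 − ω₀s₂/2)·φⱼ₊₁ⁿ + ω₀s₂·φⱼⁿ + (1 − s₁/2 − ω₀s₂/2)·φⱼ₋₁ⁿ + (s₁−1)·φⱼⁿ⁻¹ + s₁·Δt·R. -/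
import Mathlib


/-- From the MRT-LB evolution equations, for every `j` and `n ≥ 1`,
the macroscopic variable satisfies Eq. (2-16) of the paper. -/
theorem mrt_lb_intermediate_scheme
    (Δt R ω₀ s₁ s₂ : ℝ) (hΔt : 0 < Δt)
    (fm f0 f1 : ℤ → ℕ → ℝ) (φ : ℤ → ℕ → ℝ) (ω₁ : ℝ)
    (hω₁ : ω₁ = (1 - ω₀) / 2)
    (hφ : ∀ (j : ℤ) (n : ℕ),
      φ j n = fm j n + f0 j n + f1 j n + (Δt / 2) * R)
    (hevm : ∀ (j : ℤ) (n : ℕ), fm j (n + 1) =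
      fm (j + 1) n - (s₁ / 2) * (fm (j + 1) n - f1 (j + 1) n)
        + (s₂ / 2) * f0 (j + 1) n - (ω₀ * s₂ / 2) * φ (j + 1) n
        + (ω₁ + ω₀ * s₂ / 4) * Δt * R)
    (hev0 : ∀ (j : ℤ) (n : ℕ), f0 j (n + 1) =
      (1 - s₂) * f0 j n + ω₀ * s₂ * φ j n + ω₀ * (1 - s₂ / 2) * Δt * R)
    (hevp : ∀ (j : ℤ) (n : ℕ), f1 j (n + 1) =
      f1 (j - 1) n + (s₁ / 2) * (fm (j - 1) n - f1 (j - 1) n)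
        + (s₂ / 2) * f0 (j - 1) n - (ω₀ * s₂ / 2) * φ (j - 1) n
        + (ω₁ + ω₀ * s₂ / 4) * Δt * R) :
    ∀ (j : ℤ) (n : ℕ), 1 ≤ n →
      φ j (n + 1) =
        (s₁ / 2 + s₂ / 2 - 1) * (f0 (j - 1) n - 2 * f0 j n + f0 (j + 1) n)
        + (1 - s₁ / 2 - ω₀ * s₂ / 2) * φ (j + 1) n
        + ω₀ * s₂ * φ j n
        + (1 - s₁ / 2 - ω₀ * s₂ / 2) * φ (j - 1) n
        + (s₁ - 1) * φ j (n - 1)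
        + s₁ * Δt * R := by
  intro j n hn
  obtain ⟨m, rfl⟩ : ∃ m, n = m + 1 := ⟨n - 1, (Nat.succ_pred_eq_of_pos hn).symm⟩
  have h9 : f1 (j + 1) (m + 1) =
      f1 j m + (s₁ / 2) * (fm j m - f1 j m) + (s₂ / 2) * f0 j m
        - (ω₀ * s₂ / 2) * φ j m + (ω₁ + ω₀ * s₂ / 4) * Δt * R := by
    have h := hevp (j + 1) m
    simpa using h
  have h10 : fm (j - 1) (m + 1) =
      fm j m - (s₁ / 2) * (fm j m - f1 j m) + (s₂ / 2) * f0 j m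
        - (ω₀ * s₂ / 2) * φ j m + (ω₁ + ω₀ * s₂ / 4) * Δt * R := by
    have h := hevm (j - 1) m
    simpa using h
  simp only [Nat.add_sub_cancel]
  rw [hφ j (m + 1 + 1), hevm j (m + 1), hev0 j (m + 1), hevp j (m + 1),
    hφ (j + 1) (m + 1), hφ (j - 1) (m + 1), hφ j (m + 1),
    h9, h10, hev0 j m, hφ j m, hω₁]
  ring
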